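/- Fix integers N_tx, N_rx ≥ 1 and D ∈ ℕ_+ such that D divides N_rx and D ≤ N_rx, and let N_Σ = N_rx + (N_tx − 1)D. Consider the generalized nested array with Δ = D and pairwise distinct grid angles θ_1, …, θ_V ∈ [−π/2, π/2) with V ≥ N_Σ. Then for every integer N_s with 1 ≤ N_s ≤ N_tx, there exist T ∈ ℕ_+ and a waveform matrix S ∈ ℂ^{T×N_tx} with rank(S) = N_s such that the sensing matrix B = (S·A_tx) ⊙ A_rx satisfies krank(B) = min(N_s·N_rx, N_Σ). -/

import Mathlib

/-- The Kruskal rank of a complex matrix `M`: the largest integer `r` such that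
every set of `r` columns of `M` is linearly independent. -/
noncomputable def krank {m n : Type*} [Fintype m] [Fintype n] (M : Matrix m n ℂ) : ℕ :=
  sSup {r : ℕ | r ≤ Fintype.card n ∧
    ∀ s : Finset n, s.card = r → LinearIndependent ℂ (fun j : s => M.transpose (j : n))}

/-- The Khatri-Rao (columnwise Kronecker) product. -/
def khatriRao {p q V : Type*} (A : Matrix p V ℂ) (B : Matrix q V ℂ) :
    Matrix (p × q) V ℂ :=
  Matrix.of fun nm i => A nm.1 i * B nm.2 i

/-- Exponent selection: `njf c b j = min (j*c) (b+j)`. -/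
def njf (c b j : ℕ) : ℕ := min (j * c) (b + j)

lemma njf_strictMono (c b : ℕ) (hc1 : 1 ≤ c) : StrictMono (njf c b) := by
  intro j j' h
  have h1 : j * c < j' * c := by
    calc j * c < (j + 1) * c := by nlinarith
    _ ≤ j' * c := Nat.mul_le_mul_right c h
  exact lt_min ((min_le_left _ _).trans_lt h1)
    ((min_le_right _ _).trans_lt (by omega))

lemma njf_step (c b j : ℕ) (hc1 : 1 ≤ c) : njf c b (j + 1) ≤ njf c b j + c := by
  have : njf c b j + c = min (j * c + c) (b + j + c) := (Nat.add_min_add_right _ _ _).symm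
  rw [this, njf]
  have h1 : (j + 1) * c = j * c + c := by ring
  exact le_min ((min_le_left _ _).trans (by omega)) ((min_le_right _ _).trans (by omega))

/-- Key covering lemma: the exponents `njf c b j * D + m` with `j < Ns`, `m < Nrx`
cover all naturals below `njf c b (Ns-1) * D + Nrx`. -/
lemma njf_cover (c b D Nrx Ns : ℕ) (hc : c * D = Nrx) (hc1 : 1 ≤ c) (hNs : 1 ≤ Ns)
    (k : ℕ) (hk : k < njf c b (Ns - 1) * D + Nrx) :
    ∃ j m, j < Ns ∧ m < Nrx ∧ njf c b j * D + m = k := by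
  classical
  have hP0 : njf c b 0 * D ≤ k := by simp [njf]
  obtain ⟨j0, hj0le, hPj0, hmax⟩ :
      ∃ j0, j0 ≤ Ns - 1 ∧ njf c b j0 * D ≤ k ∧
        (j0 < Ns - 1 → ¬ (njf c b (j0 + 1) * D ≤ k)) := by
    refine ⟨Nat.findGreatest (fun j => njf c b j * D ≤ k) (Ns - 1),
      Nat.findGreatest_le _,
      Nat.findGreatest_spec (P := fun j => njf c b j * D ≤ k) (m := 0) (Nat.zero_le _) hP0,
      fun hlt => ?_⟩
    exact Nat.findGreatest_is_greatest (P := fun j => njf c b j * D ≤ k) (n := Ns - 1)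
      (by omega) (by omega)
  have hup : k < njf c b j0 * D + Nrx := by
    rcases eq_or_lt_of_le hj0le with heq | hlt
    · rw [heq]; exact hk
    · have hnot := hmax hlt
      have hstep : njf c b (j0 + 1) * D ≤ njf c b j0 * D + Nrx := by
        calc njf c b (j0 + 1) * D ≤ (njf c b j0 + c) * D :=
              Nat.mul_le_mul_right D (njf_step c b j0 hc1)
          _ = njf c b j0 * D + Nrx := by rw [add_mul, hc]
      omega
  refine ⟨j0, k - njf c b j0 * D, by omega, by omega, by omega⟩

lemma njf_top (c b D Nrx Ns Ntx : ℕ) (hc : c * D = Nrx) (hNs : 1 ≤ Ns) (hNsNtx : Ns ≤ Ntx)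
    (hb : b = Ntx - Ns) :
    njf c b (Ns - 1) * D + Nrx = min (Ns * Nrx) (Nrx + (Ntx - 1) * D) := by
  obtain ⟨p, rfl⟩ : ∃ p, Ns = p + 1 := ⟨Ns - 1, by omega⟩
  have h1 : b + (p + 1 - 1) = Ntx - 1 := by omega
  rw [show p + 1 - 1 = p from rfl] at h1 ⊢
  rw [njf, h1]
  rcases le_total (p * c) (Ntx - 1) with h | h
  · rw [min_eq_left h]
    have h2 : p * c * D ≤ (Ntx - 1) * D := Nat.mul_le_mul_right D h
    have h3 : p * c * D = p * Nrx := by rw [mul_assoc, hc]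
    have h4 : (p + 1) * Nrx = p * Nrx + Nrx := by ring
    rw [min_eq_left (by omega)]
    omega
  · rw [min_eq_right h]
    have h2 : (Ntx - 1) * D ≤ p * c * D := Nat.mul_le_mul_right D h
    have h3 : p * c * D = p * Nrx := by rw [mul_assoc, hc]
    have h4 : (p + 1) * Nrx = p * Nrx + Nrx := by ring
    rw [min_eq_right (by omega)]
    omega

/-- for the generalized nested array with spacing `Δ = D` (`D ∣ N_rx`,
`D ≤ N_rx`) and `N_Σ = N_rx + (N_tx − 1)·D`, for every `1 ≤ N_s ≤ N_tx` there is a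
waveform matrix `S` of rank `N_s` such that the sensing matrix achieves the maximal
Kruskal rank `min (N_s·N_rx) N_Σ`. -/
theorem stmt_9 (Ntx Nrx D V Nsum : ℕ)
    (hNtx : 0 < Ntx) (hNrx : 0 < Nrx) (hD : 0 < D) (hDdvd : D ∣ Nrx) (hDle : D ≤ Nrx)
    (hNsum : Nsum = Nrx + (Ntx - 1) * D)
    (dtx : Fin Ntx → ℤ) (hdtx : ∀ n, dtx n = (n : ℤ) * D)
    (drx : Fin Nrx → ℤ) (hdrx : ∀ m, drx m = (m : ℤ))
    (θ : Fin V → ℝ) (hθinj : Function.Injective θ)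
    (hθrange : ∀ i, θ i ∈ Set.Ico (-(Real.pi / 2)) (Real.pi / 2))
    (hV : Nsum ≤ V)
    (Atx : Matrix (Fin Ntx) (Fin V) ℂ)
    (hAtx : ∀ n i, Atx n i =
      Complex.exp (Complex.I * Real.pi * (dtx n : ℂ) * (Real.sin (θ i) : ℂ)))
    (Arx : Matrix (Fin Nrx) (Fin V) ℂ)
    (hArx : ∀ m i, Arx m i =
      Complex.exp (Complex.I * Real.pi * (drx m : ℂ) * (Real.sin (θ i) : ℂ))) :
    ∀ Ns : ℕ, 1 ≤ Ns → Ns ≤ Ntx →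
      ∃ T : ℕ, 0 < T ∧ ∃ S : Matrix (Fin T) (Fin Ntx) ℂ,
        S.rank = Ns ∧ krank (khatriRao (S * Atx) Arx) = min (Ns * Nrx) Nsum := by
  classical
  intro Ns hNs1 hNsNtx
  set c : ℕ := Nrx / D with hcdef
  have hc : c * D = Nrx := Nat.div_mul_cancel hDdvd
  have hc1 : 1 ≤ c := hcdef ▸ (Nat.one_le_div_iff hD).2 hDle
  set b : ℕ := Ntx - Ns with hbdef
  have hflt : ∀ j : Fin Ns, njf c b (j : ℕ) < Ntx := by
    intro j
    have h1 : njf c b (j : ℕ) ≤ b + (j : ℕ) := min_le_right _ _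
    have h2 : (j : ℕ) < Ns := j.isLt
    omega
  set f : Fin Ns → Fin Ntx := fun j => ⟨njf c b (j : ℕ), hflt j⟩ with hfdef
  have finj : Function.Injective f := by
    intro j j' h
    have h1 : njf c b (j : ℕ) = njf c b (j' : ℕ) := congrArg Fin.val h
    exact Fin.ext ((njf_strictMono c b hc1).injective h1)
  set S : Matrix (Fin Ns) (Fin Ntx) ℂ :=
    Matrix.of (fun j t => if t = f j then (1 : ℂ) else 0) with hSdef
  -- rank S = Ns
  have hSS : S * S.transpose = 1 := by
    ext j j'
    simp only [Matrix.mul_apply, Matrix.transpose_apply, hSdef, Matrix.of_apply, ite_mul,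
      one_mul, zero_mul]
    rw [Finset.sum_ite_eq' Finset.univ (f j) (fun t => if t = f j' then (1 : ℂ) else 0)]
    simp [Matrix.one_apply, finj.eq_iff, eq_comm]
  have hrank : S.rank = Ns := by
    refine le_antisymm (S.rank_le_card_height.trans (by simp)) ?_
    have h := Matrix.rank_mul_le_left S S.transpose
    rw [hSS, Matrix.rank_one] at h
    simpa using h
  -- the node values
  set z : Fin V → ℂ := fun i => Complex.exp (Complex.I * Real.pi * (Real.sin (θ i) : ℂ))
    with hzdef
  have hzpow : ∀ (i : Fin V) (d : ℕ),
      Complex.exp (Complex.I * Real.pi * (d : ℂ) * (Real.sin (θ i) : ℂ)) = z i ^ d := by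
    intro i d
    rw [hzdef]
    rw [show Complex.I * Real.pi * (d : ℂ) * (Real.sin (θ i) : ℂ)
        = (d : ℂ) * (Complex.I * Real.pi * (Real.sin (θ i) : ℂ)) by ring]
    exact Complex.exp_nat_mul _ d
  have hsin : ∀ i, Real.sin (θ i) ∈ Set.Ico (-1 : ℝ) 1 := by
    intro i
    obtain ⟨h1, h2⟩ := hθrange i
    refine ⟨Real.neg_one_le_sin _, ?_⟩
    have hmem : θ i ∈ Set.Icc (-(Real.pi / 2)) (Real.pi / 2) := ⟨h1, h2.le⟩
    have hmem2 : Real.pi / 2 ∈ Set.Icc (-(Real.pi / 2)) (Real.pi / 2) := by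
      constructor <;> nlinarith [Real.pi_pos]
    have := Real.strictMonoOn_sin hmem hmem2 h2
    rwa [Real.sin_pi_div_two] at this
  have hzinj : Function.Injective z := by
    intro i i' h
    rw [hzdef, Complex.exp_eq_exp_iff_exists_int] at h
    obtain ⟨n, hn⟩ := h
    have him := congrArg Complex.im hn
    simp [Complex.mul_im, Complex.mul_re, Complex.sin_ofReal_re] at him
    have hπ := Real.pi_pos
    have hs : Real.sin (θ i) = Real.sin (θ i') + 2 * n := by
      have h2 : Real.pi * Real.sin (θ i) = Real.pi * (Real.sin (θ i') + 2 * n) := by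
        rw [him]; ring
      exact mul_left_cancel₀ (ne_of_gt hπ) h2
    obtain ⟨ha1, ha2⟩ := hsin i
    obtain ⟨hb1, hb2⟩ := hsin i'
    have hn0 : (n : ℝ) = 0 := by
      have l1 : (-1 : ℝ) < (n : ℝ) := by nlinarith
      have l2 : (n : ℝ) < 1 := by nlinarith
      have : (-1 : ℤ) < n ∧ n < 1 := ⟨by exact_mod_cast l1, by exact_mod_cast l2⟩
      have : n = 0 := by omega
      simp [this]
    have hseq : Real.sin (θ i) = Real.sin (θ i') := by rw [hs, hn0]; ring
    apply hθinj
    have hmem : θ i ∈ Set.Icc (-(Real.pi / 2)) (Real.pi / 2) :=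
      ⟨(hθrange i).1, (hθrange i).2.le⟩
    have hmem' : θ i' ∈ Set.Icc (-(Real.pi / 2)) (Real.pi / 2) :=
      ⟨(hθrange i').1, (hθrange i').2.le⟩
    exact Real.injOn_sin hmem hmem' hseq
  -- entries of the sensing matrix
  set B : Matrix (Fin Ns × Fin Nrx) (Fin V) ℂ := khatriRao (S * Atx) Arx with hBdef
  have hSA : ∀ (j : Fin Ns) (i : Fin V), (S * Atx) j i = Atx (f j) i := by
    intro j i
    simp only [Matrix.mul_apply, hSdef, Matrix.of_apply, ite_mul, one_mul, zero_mul]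
    rw [Finset.sum_ite_eq' Finset.univ (f j) (fun t => Atx t i)]
    simp
  have hB : ∀ (j : Fin Ns) (m : Fin Nrx) (i : Fin V),
      B (j, m) i = z i ^ (njf c b (j : ℕ) * D + (m : ℕ)) := by
    intro j m i
    show (S * Atx) j i * Arx m i = _
    have d1 : ((dtx (f j) : ℤ) : ℂ) = ((njf c b (j : ℕ) * D : ℕ) : ℂ) := by
      rw [hdtx]
      push_cast
      simp [hfdef]
    have d2 : ((drx m : ℤ) : ℂ) = (((m : ℕ) : ℕ) : ℂ) := by
      rw [hdrx]; push_cast; ring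
    rw [hSA, hAtx, hArx, d1, d2, hzpow, hzpow, pow_add]
  -- the target Kruskal rank
  set r : ℕ := min (Ns * Nrx) Nsum with hrdef
  have hrtopeq : njf c b (Ns - 1) * D + Nrx = r := by
    rw [hrdef, hNsum]
    exact njf_top c b D Nrx Ns Ntx hc hNs1 hNsNtx hbdef
  have hexplt : ∀ (j : Fin Ns) (m : Fin Nrx), njf c b (j : ℕ) * D + (m : ℕ) < r := by
    intro j m
    have h1 : njf c b (j : ℕ) ≤ njf c b (Ns - 1) :=
      (njf_strictMono c b hc1).monotone (by omega)
    have h2 : njf c b (j : ℕ) * D ≤ njf c b (Ns - 1) * D := Nat.mul_le_mul_right D h1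
    have h3 : (m : ℕ) < Nrx := m.isLt
    omega
  have hrleNsum : r ≤ Nsum := min_le_right _ _
  have hrleV : r ≤ V := hrleNsum.trans hV
  refine ⟨Ns, hNs1, S, hrank, ?_⟩
  -- membership: every r columns are linearly independent
  have hmem : r ∈ {r' : ℕ | r' ≤ Fintype.card (Fin V) ∧
      ∀ s : Finset (Fin V), s.card = r' →
        LinearIndependent ℂ (fun j : s => B.transpose (j : Fin V))} := by
    refine ⟨by simpa using hrleV, ?_⟩
    intro s hs
    rw [Fintype.linearIndependent_iff]
    intro g hg
    -- all power sums below r vanish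
    have hps : ∀ k : ℕ, k < r → (∑ j : s, g j * z (j : Fin V) ^ k) = 0 := by
      intro k hk
      obtain ⟨j0, m0, hj0, hm0, hkeq⟩ :=
        njf_cover c b D Nrx Ns hc hc1 hNs1 k (by omega)
      have hrow := congrFun hg (⟨j0, hj0⟩, ⟨m0, hm0⟩)
      simp only [Finset.sum_apply, Pi.smul_apply, smul_eq_mul, Pi.zero_apply] at hrow
      have : ∀ j : s, B.transpose (j : Fin V) (⟨j0, hj0⟩, ⟨m0, hm0⟩) = z (j : Fin V) ^ k := by
        intro j
        rw [Matrix.transpose_apply, hB]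
        exact congrArg (fun t => z ((j : s) : Fin V) ^ t) hkeq
      calc (∑ j : s, g j * z (j : Fin V) ^ k)
          = ∑ j : s, g j * B.transpose (j : Fin V) (⟨j0, hj0⟩, ⟨m0, hm0⟩) := by
            refine Finset.sum_congr rfl fun j _ => by rw [this j]
        _ = 0 := hrow
    -- Vandermonde argument
    have hcard : Fintype.card s = r := by simp [hs]
    set e : s ≃ Fin r := Fintype.equivFinOfCardEq hcard with hedef
    set v : Fin r → ℂ := fun a => z ((e.symm a : s) : Fin V) with hvdef
    have hvinj : Function.Injective v := by
      intro a a' h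
      exact e.symm.injective (Subtype.ext (hzinj h))
    set W : Matrix (Fin r) (Fin r) ℂ := Matrix.of (fun k a => v a ^ (k : ℕ)) with hWdef
    have hdet : W.det ≠ 0 := by
      have : W = (Matrix.vandermonde v).transpose := by
        ext k a; simp [hWdef, Matrix.vandermonde]
      rw [this, Matrix.det_transpose, Matrix.det_vandermonde]
      refine Finset.prod_ne_zero_iff.2 fun a _ => Finset.prod_ne_zero_iff.2 fun a' ha' => ?_
      have : a ≠ a' := by
        intro h; rw [h] at ha'; simp at ha'
      exact sub_ne_zero_of_ne fun hv => this (hvinj hv.symm)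
    have hmul : W.mulVec (fun a => g (e.symm a)) = 0 := by
      ext k
      simp only [Matrix.mulVec, dotProduct, hWdef, Matrix.of_apply, Pi.zero_apply]
      have := Equiv.sum_comp e.symm (fun j : s => g j * z ((j : s) : Fin V) ^ (k : ℕ))
      calc (∑ a : Fin r, v a ^ (k : ℕ) * g (e.symm a))
          = ∑ a : Fin r, g (e.symm a) * z ((e.symm a : s) : Fin V) ^ (k : ℕ) := by
            refine Finset.sum_congr rfl fun a _ => by rw [hvdef]; ring
        _ = ∑ j : s, g j * z ((j : s) : Fin V) ^ (k : ℕ) := this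
        _ = 0 := hps (k : ℕ) k.isLt
    have hWinj : Function.Injective W.mulVec := by
      rw [Matrix.mulVec_injective_iff_isUnit]
      exact (Matrix.isUnit_iff_isUnit_det W).2 (isUnit_iff_ne_zero.2 hdet)
    have hg0 : (fun a => g (e.symm a)) = 0 := by
      apply hWinj
      rw [hmul, Matrix.mulVec_zero]
    intro j
    have := congrFun hg0 (e j)
    simpa using this
  -- upper bound: every member of the krank set is ≤ r
  have hub : ∀ x ∈ {r' : ℕ | r' ≤ Fintype.card (Fin V) ∧
      ∀ s : Finset (Fin V), s.card = r' →
        LinearIndependent ℂ (fun j : s => B.transpose (j : Fin V))}, x ≤ r := by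
    rintro x ⟨hxV, hind⟩
    obtain ⟨s, -, hs⟩ := Finset.exists_subset_card_eq (show x ≤ (Finset.univ : Finset (Fin V)).card by simpa using hxV)
    have hli := hind s hs
    set gmap : Fin Ns × Fin Nrx → Fin r :=
      fun jm => ⟨njf c b (jm.1 : ℕ) * D + (jm.2 : ℕ), hexplt jm.1 jm.2⟩ with hgmapdef
    set Ψ : (Fin r → ℂ) →ₗ[ℂ] ((Fin Ns × Fin Nrx) → ℂ) := LinearMap.funLeft ℂ ℂ gmap
      with hΨdef
    have hrange : ∀ j : s, B.transpose ((j : s) : Fin V) ∈ LinearMap.range Ψ := by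
      intro j
      refine ⟨fun k => z ((j : s) : Fin V) ^ (k : ℕ), ?_⟩
      ext jm
      rw [hΨdef]
      simp only [LinearMap.funLeft_apply]
      rw [Matrix.transpose_apply]
      obtain ⟨j1, m1⟩ := jm
      rw [hB]
    have hspan : Submodule.span ℂ (Set.range fun j : s => B.transpose ((j : s) : Fin V))
        ≤ LinearMap.range Ψ := by
      rw [Submodule.span_le]
      rintro _ ⟨j, rfl⟩
      exact hrange j
    have h1 : Module.finrank ℂ
        (Submodule.span ℂ (Set.range fun j : s => B.transpose ((j : s) : Fin V)))
        = Fintype.card s := finrank_span_eq_card hli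
    have h2 := Submodule.finrank_mono hspan
    have h3 : Module.finrank ℂ (LinearMap.range Ψ) ≤ r := by
      have := Ψ.finrank_range_le
      simpa using this
    have hcard : Fintype.card s = x := by simp [hs]
    omega
  -- conclude
  show krank B = r
  rw [krank]
  refine le_antisymm (csSup_le ⟨r, hmem⟩ hub) (le_csSup ⟨Fintype.card (Fin V), ?_⟩ hmem)
  intro y hy
  exact hy.1
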